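/- There is a continuous linear equivalence F from ℓ¹₀ = ℓ¹₀ℕ onto ℓ¹(ℕ∖{0}), namely restriction of a zero-sum summable sequence to the coordinates indexed by ℕ∖{0}, satisfying ‖F(f)‖ ≤ ‖f‖ for all f ∈ ℓ¹₀ and ‖F⁻¹(h)‖ ≤ 2‖h‖ for all h ∈ ℓ¹(ℕ∖{0}). In particular, the Banach–Mazur distance between ℓ¹₀ and ℓ¹ is at most 2. -/

import Mathlib

open scoped ENNReal

/-- Any element of `ℓ¹Q` is summable. -/
theorem l1summable {Q : Type*} (f : lp (fun _ : Q => ℝ) 1) : Summable fun q : Q => f q := by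
  have h := (lp.memℓp f).summable (p := 1) (by norm_num)
  simp only [ENNReal.toReal_one, Real.rpow_one] at h
  exact h.of_norm

/-- `ℓ¹₀Q`, the subspace of zero-sum elements of `ℓ¹Q`. -/
noncomputable def l1zero (Q : Type*) : Submodule ℝ (lp (fun _ : Q => ℝ) 1) where
  carrier := {f | ∑' q : Q, f q = 0}
  add_mem' := by
    intro f g hf hg
    simp only [Set.mem_setOf_eq] at *
    have hpt : ∀ q : Q, (f + g) q = f q + g q := fun q => by
      rw [lp.coeFn_add]; rfl
    rw [tsum_congr hpt, Summable.tsum_add (l1summable f) (l1summable g), hf, hg, add_zero]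
  zero_mem' := by
    simp only [Set.mem_setOf_eq]
    have hpt : ∀ q : Q, (0 : lp (fun _ : Q => ℝ) 1) q = 0 := fun q => by
      rw [lp.coeFn_zero]; rfl
    rw [tsum_congr hpt, tsum_zero]
  smul_mem' := by
    intro c f hf
    simp only [Set.mem_setOf_eq] at *
    have hpt : ∀ q : Q, (c • f) q = c * f q := fun q => by
      rw [lp.coeFn_smul]; rfl
    rw [tsum_congr hpt, tsum_mul_left, hf, mul_zero]

namespace BMaux

noncomputable section

abbrev L1N := lp (fun _ : ℕ => ℝ) 1
abbrev L1S := lp (fun _ : {n : ℕ // n ≠ 0} => ℝ) 1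

lemma summable_norm {Q : Type*} (f : lp (fun _ : Q => ℝ) 1) : Summable fun q => ‖f q‖ := by
  have h := (lp.memℓp f).summable (p := 1) (by norm_num)
  simpa using h

lemma norm_eq {Q : Type*} (f : lp (fun _ : Q => ℝ) 1) : ‖f‖ = ∑' q, ‖f q‖ := by
  have h := lp.norm_eq_tsum_rpow (p := 1) (by norm_num) f
  simpa using h

def e : ℕ ≃ {n : ℕ // n ≠ 0} where
  toFun n := ⟨n + 1, Nat.succ_ne_zero n⟩
  invFun m := m.1 - 1
  left_inv n := by simp
  right_inv m := Subtype.ext (Nat.succ_pred_eq_of_ne_zero m.2)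

lemma memℓp_restr (f : L1N) : Memℓp (fun n : {n : ℕ // n ≠ 0} => f n.1) 1 := by
  apply memℓp_gen
  simp only [ENNReal.toReal_one, Real.rpow_one]
  exact (summable_norm f).comp_injective Subtype.coe_injective

def ext (h : L1S) : ℕ → ℝ
  | 0 => -(∑' m, h m)
  | (k+1) => h ⟨k+1, Nat.succ_ne_zero k⟩

lemma summable_ext (h : L1S) : Summable fun n => ‖ext h n‖ := by
  rw [← summable_nat_add_iff 1]
  exact e.summable_iff.mpr (summable_norm h)

lemma memℓp_ext (h : L1S) : Memℓp (ext h) 1 := by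
  apply memℓp_gen
  simp only [ENNReal.toReal_one, Real.rpow_one]
  exact summable_ext h

lemma tsum_ext_succ (h : L1S) : ∑' n : ℕ, ext h (n + 1) = ∑' m, h m :=
  e.tsum_eq (fun m => h m)

lemma tsum_ext (h : L1S) : ∑' n, ext h n = 0 := by
  rw [Summable.tsum_eq_zero_add (summable_ext h).of_norm, tsum_ext_succ h]
  show -(∑' m, h m) + (∑' m, h m) = 0
  ring

def fwdL : ↥(l1zero ℕ) →ₗ[ℝ] L1S where
  toFun f := ⟨fun n => (f : L1N) n.1, memℓp_restr _⟩
  map_add' f g := by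
    apply Subtype.ext
    funext n
    show ((f : L1N) + (g : L1N)) n.1 = _
    rw [lp.coeFn_add]
    rfl
  map_smul' c f := by
    apply Subtype.ext
    funext n
    show (c • (f : L1N)) n.1 = _
    rw [lp.coeFn_smul]
    rfl

def bwdL : L1S →ₗ[ℝ] ↥(l1zero ℕ) where
  toFun h := ⟨⟨ext h, memℓp_ext h⟩, tsum_ext h⟩
  map_add' h₁ h₂ := by
    apply Subtype.ext; apply Subtype.ext
    funext n
    show ext (h₁ + h₂) n = ext h₁ n + ext h₂ n
    have hpt : ∀ m, (h₁ + h₂) m = h₁ m + h₂ m := fun m => by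
      rw [lp.coeFn_add]; rfl
    cases n with
    | zero =>
      show -(∑' m, (h₁ + h₂) m) = -(∑' m, h₁ m) + -(∑' m, h₂ m)
      rw [tsum_congr hpt, Summable.tsum_add (l1summable h₁) (l1summable h₂)]
      ring
    | succ k => exact hpt _
  map_smul' c h := by
    apply Subtype.ext; apply Subtype.ext
    funext n
    show ext (c • h) n = c * ext h n
    have hpt : ∀ m, (c • h) m = c * h m := fun m => by
      rw [lp.coeFn_smul]; rfl
    cases n with
    | zero =>
      show -(∑' m, (c • h) m) = c * -(∑' m, h m)
      rw [tsum_congr hpt, tsum_mul_left]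
      ring
    | succ k => exact hpt _

lemma fwd_norm (f : ↥(l1zero ℕ)) : ‖fwdL f‖ ≤ 1 * ‖f‖ := by
  rw [one_mul]
  show ‖(fwdL f : L1S)‖ ≤ ‖(f : L1N)‖
  rw [norm_eq, norm_eq]
  exact Summable.tsum_le_tsum_of_inj Subtype.val Subtype.coe_injective
    (fun _ _ => norm_nonneg _) (fun n => le_of_eq rfl)
    ((summable_norm (f : L1N)).comp_injective Subtype.coe_injective)
    (summable_norm (f : L1N))

lemma bwd_norm (h : L1S) : ‖bwdL h‖ ≤ 2 * ‖h‖ := by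
  show ‖((bwdL h : ↥(l1zero ℕ)) : L1N)‖ ≤ 2 * ‖h‖
  rw [norm_eq, norm_eq]
  have h1 : (∑' n : ℕ, ‖ext h n‖) = ‖ext h 0‖ + ∑' n : ℕ, ‖ext h (n + 1)‖ :=
    Summable.tsum_eq_zero_add (summable_ext h)
  have h2 : (∑' n : ℕ, ‖ext h (n + 1)‖) = ∑' m, ‖h m‖ := e.tsum_eq (fun m => ‖h m‖)
  have h3 : ‖ext h 0‖ ≤ ∑' m, ‖h m‖ := by
    show ‖-(∑' m, h m)‖ ≤ _
    rw [norm_neg]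
    exact norm_tsum_le_tsum_norm (summable_norm h)
  calc (∑' n : ℕ, ‖((bwdL h : ↥(l1zero ℕ)) : L1N) n‖) = ∑' n : ℕ, ‖ext h n‖ := rfl
    _ = ‖ext h 0‖ + ∑' m, ‖h m‖ := by rw [h1, h2]
    _ ≤ (∑' m, ‖h m‖) + ∑' m, ‖h m‖ := by linarith
    _ = 2 * ∑' m, ‖h m‖ := by ring

def fwdC : ↥(l1zero ℕ) →L[ℝ] L1S := fwdL.mkContinuous 1 fwd_norm
def bwdC : L1S →L[ℝ] ↥(l1zero ℕ) := bwdL.mkContinuous 2 bwd_norm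

lemma left_inv : Function.LeftInverse bwdC fwdC := by
  intro f
  apply Subtype.ext; apply Subtype.ext
  funext n
  show ext (fwdL f) n = (f : L1N) n
  cases n with
  | zero =>
    show -(∑' m : {n : ℕ // n ≠ 0}, (f : L1N) m.1) = (f : L1N) 0
    have hz : ∑' n : ℕ, (f : L1N) n = 0 := f.2
    have hsplit : (∑' n : ℕ, (f : L1N) n)
        = (f : L1N) 0 + ∑' n : ℕ, (f : L1N) (n + 1) :=
      Summable.tsum_eq_zero_add (l1summable (f : L1N))
    have hsub : (∑' n : ℕ, (f : L1N) (n + 1))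
        = ∑' m : {n : ℕ // n ≠ 0}, (f : L1N) m.1 :=
      e.tsum_eq (fun m : {n : ℕ // n ≠ 0} => (f : L1N) m.1)
    rw [hz, hsub] at hsplit
    linarith
  | succ k => rfl

lemma right_inv : Function.RightInverse bwdC fwdC := by
  intro h
  apply Subtype.ext
  funext n
  obtain ⟨k, hk⟩ := n
  cases k with
  | zero => exact absurd rfl hk
  | succ j => rfl

end
end BMaux

/-- There is a continuous linear equivalence from `ℓ¹₀ = ℓ¹₀ℕ` onto `ℓ¹(ℕ∖{0})`, given by
restricting a zero-sum summable sequence to the coordinates indexed by `ℕ∖{0}`, which satisfies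
`‖F f‖ ≤ ‖f‖` and `‖F⁻¹ h‖ ≤ 2‖h‖`.  In particular the Banach–Mazur distance between `ℓ¹₀`
and `ℓ¹` is at most `2`. -/
theorem exists_equiv_l1zero_l1_norm_le_two :
    ∃ F : ↥(l1zero ℕ) ≃L[ℝ] lp (fun _ : {n : ℕ // n ≠ 0} => ℝ) 1,
      (∀ (f : ↥(l1zero ℕ)) (n : {n : ℕ // n ≠ 0}),
        (F f) n = (f : lp (fun _ : ℕ => ℝ) 1) (n : ℕ)) ∧
      (∀ f : ↥(l1zero ℕ), ‖F f‖ ≤ ‖f‖) ∧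
      (∀ h : lp (fun _ : {n : ℕ // n ≠ 0} => ℝ) 1, ‖F.symm h‖ ≤ 2 * ‖h‖) := by
  refine ⟨ContinuousLinearEquiv.equivOfInverse BMaux.fwdC BMaux.bwdC BMaux.left_inv
    BMaux.right_inv, fun f n => rfl, fun f => ?_, fun h => BMaux.bwd_norm h⟩
  have := BMaux.fwd_norm f
  rw [one_mul] at this
  exact this
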